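/- Let q ∈ ℂ with 0 < |q| < 1, let a ∈ ℂ, let M, N ≥ 1, let B₁,…,B_N be M×M complex matrices, let t₁,…,t_N ∈ ℂ∖{0}, and let τ, x ∈ ℂ∖{0} with q^{m}·τ/x ≠ 1 for every integer m ≥ 0 and with τqⁿ ∉ {t₁,…,t_N} ∪ {t₁/q,…,t_N/q} for all n ≥ 0. Let y : ℂ → ℂ^M satisfy y(z) − y(qz) = (1−q)·z·Σ_i (z − t_i)⁻¹ B_i y(z) at every z = τqⁿ (n ≥ 0). Let Y₀(z) ∈ ℂ^{MN} be the block vector with i-th block y(z)/(z − t_i) (at z = 0 its i-th block is −y(0)/t_i), and assume Y₀(τqⁿ) → Y₀(0) as n → ∞, that the Jackson integrals Φ(x) = ∫₀^τ Y₀(t)·F(t/x) d_q t and Φ(qx) = ∫₀^τ Y₀(t)·F(t/(qx)) d_q t converge (componentwise summable, as do the analogous series for D_q Y₀), and that the boundary term vanishes: F(τ/(qx))·(τ·I_{MN} − S)·Y₀(τ) equals the block vector all of whose N blocks are y(0). Then (x·I_{MN} − S)·(a·Φ(x) − Φ(qx))/((1−q)x) = (B + ((a−1)/(1−q))·I_{MN})·Φ(x),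 where S is block-diagonal with i-th block t_i·I_M and B is the block matrix whose (i,j)-block is B_j for every i. (This is the q-Okubo equation (xI − S)·D_x Y = (q^λ B + [λ]I)·Y satisfied by Y = x^λ Φ, with a = q^{−λ} and [λ] = (1−q^λ)/(1−q), written with the prefactor x^λ removed.) -/

import Mathlib

/-- The `q`-analogue of the Euler kernel:
`F(u) = ∏_{k=0}^∞ (1 − a q^{k+1} u)/(1 − q^{k+1} u)`. -/
noncomputable def kernelF (q a u : ℂ) : ℂ :=
  ∏' k : ℕ, (1 - a * q ^ (k + 1) * u) / (1 - q ^ (k + 1) * u)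

open Filter Complex

noncomputable def qfac (q a w : ℂ) (j : ℕ) : ℂ := (1 - a * q ^ j * w) / (1 - q ^ j * w)

noncomputable def tailP (q a w : ℂ) (n : ℕ) : ℂ := ∏' k : ℕ, qfac q a w (k + n)

lemma qfac_sub_one {q a w : ℂ} (hw : ∀ m : ℕ, (1 : ℂ) - q ^ m * w ≠ 0) (j : ℕ) :
    qfac q a w j - 1 = (1 - a) * (q ^ j * w) / (1 - q ^ j * w) := by
  rw [qfac, div_sub_one (hw j)]
  ring

lemma qfac_norm_summable {q a w : ℂ} (hq1 : ‖q‖ < 1)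
    (hw : ∀ m : ℕ, (1 : ℂ) - q ^ m * w ≠ 0) :
    Summable (fun j : ℕ => ‖qfac q a w j - 1‖) := by
  apply Summable.of_norm_bounded_eventually_nat
    (g := fun j => (2 * ‖1 - a‖ * ‖w‖) * ‖q‖ ^ j)
    ((summable_geometric_of_lt_one (norm_nonneg q) hq1).mul_left _)
  have hlim : Tendsto (fun j : ℕ => ‖q ^ j * w‖) atTop (nhds 0) := by
    have := ((tendsto_pow_atTop_nhds_zero_of_norm_lt_one hq1).mul_const w).norm
    simpa using this
  have hev : ∀ᶠ j : ℕ in atTop, ‖q ^ j * w‖ ≤ 1 / 2 :=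
    hlim.eventually_le_const (by norm_num)
  filter_upwards [hev] with j hj
  rw [norm_norm, qfac_sub_one hw j]
  have hden : (1:ℝ) / 2 ≤ ‖1 - q ^ j * w‖ := by
    have := norm_sub_norm_le (1 : ℂ) (q ^ j * w)
    simp only [norm_one] at this
    linarith
  calc ‖(1 - a) * (q ^ j * w) / (1 - q ^ j * w)‖
      = ‖1 - a‖ * (‖q‖ ^ j * ‖w‖) / ‖1 - q ^ j * w‖ := by
        simp [norm_div, norm_mul, norm_pow]
    _ ≤ ‖1 - a‖ * (‖q‖ ^ j * ‖w‖) / (1 / 2) := by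
        gcongr
    _ = 2 * ‖1 - a‖ * ‖w‖ * ‖q‖ ^ j := by ring


lemma qfac_multipliable {q a w : ℂ} (hq1 : ‖q‖ < 1)
    (hw : ∀ m : ℕ, (1 : ℂ) - q ^ m * w ≠ 0) (n : ℕ) :
    Multipliable (fun k : ℕ => qfac q a w (k + n)) := by
  by_cases hz : ∃ k, qfac q a w (k + n) = 0
  · obtain ⟨j, hj⟩ := hz
    refine ⟨0, ?_⟩
    have hev : ∀ᶠ s : Finset ℕ in atTop, ∏ i ∈ s, qfac q a w (i + n) = 0 := by
      filter_upwards [Filter.eventually_ge_atTop ({j} : Finset ℕ)] with s hs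
      exact Finset.prod_eq_zero (hs (Finset.mem_singleton_self j)) hj
    exact (tendsto_congr' hev).2 tendsto_const_nhds
  · push_neg at hz
    have hs : Summable (fun j : ℕ => ‖qfac q a w j - 1‖) := qfac_norm_summable hq1 hw
    have hs' : Summable (fun k : ℕ => (3/2 : ℝ) * ‖qfac q a w (k + n) - 1‖) :=
      ((summable_nat_add_iff n).2 hs).mul_left _
    have ht : Tendsto (fun j : ℕ => ‖qfac q a w j - 1‖) atTop (nhds 0) := hs.tendsto_atTop_zero
    have hev : ∀ᶠ j : ℕ in atTop, ‖qfac q a w j - 1‖ ≤ 1 / 2 :=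
      ht.eventually_le_const (by norm_num)
    obtain ⟨K₀, hK₀⟩ := eventually_atTop.mp hev
    have hlog : Summable (fun k => Complex.log (qfac q a w (k + n))) := by
      apply Summable.of_norm_bounded_eventually_nat hs'
      filter_upwards [Filter.eventually_ge_atTop K₀] with k hk
      have h9 := Complex.norm_log_one_add_half_le_self
        (hK₀ (k + n) (le_trans hk (Nat.le_add_right _ _)))
      have h10 : 1 + (qfac q a w (k + n) - 1) = qfac q a w (k + n) := by ring
      rw [h10] at h9
      exact h9
    exact Complex.multipliable_of_summable_log hlog

lemma tailP_succ {q a w : ℂ} (hq1 : ‖q‖ < 1)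
    (hw : ∀ m : ℕ, (1 : ℂ) - q ^ m * w ≠ 0) (n : ℕ) :
    tailP q a w n = qfac q a w n * tailP q a w (n + 1) := by
  have h1 : Multipliable (fun k : ℕ => qfac q a w ((k + 1) + n)) := by
    have := qfac_multipliable hq1 hw (a := a) (n + 1)
    apply this.congr
    intro k
    congr 1
    omega
  have := tprod_eq_zero_mul' (f := fun k : ℕ => qfac q a w (k + n)) h1
  rw [tailP, this]
  simp only [zero_add]
  congr 1
  rw [tailP]
  apply tprod_congr
  intro k
  congr 1
  omega

lemma tailP_tendsto {q a w : ℂ} (hq1 : ‖q‖ < 1)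
    (hw : ∀ m : ℕ, (1 : ℂ) - q ^ m * w ≠ 0) :
    Tendsto (tailP q a w) atTop (nhds 1) := by
  have hs : Summable (fun j : ℕ => ‖qfac q a w j - 1‖) := qfac_norm_summable hq1 hw
  have ht : Tendsto (fun j : ℕ => ‖qfac q a w j - 1‖) atTop (nhds 0) := hs.tendsto_atTop_zero
  have hev : ∀ᶠ j : ℕ in atTop, ‖qfac q a w j - 1‖ ≤ 1 / 2 :=
    ht.eventually_le_const (by norm_num)
  obtain ⟨K₀, hK₀⟩ := eventually_atTop.mp hev
  set h : ℕ → ℂ := fun k => qfac q a w (k + K₀) with hh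
  have hne : ∀ k, h k ≠ 0 := by
    intro k hk0
    have h2 := hK₀ (k + K₀) (Nat.le_add_left _ _)
    have h3 : h k = qfac q a w (k + K₀) := rfl
    rw [← h3, hk0] at h2
    norm_num at h2
  have hlog : Summable (fun k => Complex.log (h k)) := by
    apply Summable.of_norm_bounded (g := fun k => (3/2 : ℝ) * ‖qfac q a w (k + K₀) - 1‖)
      (((summable_nat_add_iff K₀).2 hs).mul_left _)
    intro k
    have h9 := Complex.norm_log_one_add_half_le_self (hK₀ (k + K₀) (Nat.le_add_left _ _))
    have h10 : 1 + (qfac q a w (k + K₀) - 1) = qfac q a w (k + K₀) := by ring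
    rw [h10] at h9
    exact h9
  set P : ℂ := ∏' k, h k with hP
  have hPne : P ≠ 0 := by
    have h3 := Complex.cexp_tsum_eq_tprod hne hlog
    rw [hP, ← h3]
    exact Complex.exp_ne_zero _
  have hmulh : Multipliable h := qfac_multipliable hq1 hw K₀
  have hpartial : Tendsto (fun m => ∏ i ∈ Finset.range m, h i) atTop (nhds P) :=
    hmulh.hasProd.tendsto_prod_nat
  have hprodne : ∀ m, ∏ i ∈ Finset.range m, h i ≠ 0 := fun m =>
    Finset.prod_ne_zero_iff.2 fun i _ => hne i
  have heq : ∀ m, tailP q a w (m + K₀) = P / ∏ i ∈ Finset.range m, h i := by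
    intro m
    have hmt : Multipliable (fun k => h (k + m)) := by
      have := qfac_multipliable hq1 hw (a := a) (m + K₀)
      apply this.congr
      intro k
      show qfac q a w (k + (m + K₀)) = qfac q a w (k + m + K₀)
      congr 1
      omega
    have h4 : (∏ i ∈ Finset.range m, h i) * ∏' k, h (k + m) = P :=
      hmt.prod_mul_tprod_nat_mul'
    have h5 : tailP q a w (m + K₀) = ∏' k, h (k + m) := by
      rw [tailP]
      apply tprod_congr
      intro k
      show qfac q a w (k + (m + K₀)) = qfac q a w (k + m + K₀)
      congr 1
      omega
    rw [h5, eq_div_iff (hprodne m), mul_comm]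
    exact h4
  have h6 : Tendsto (fun m => tailP q a w (m + K₀)) atTop (nhds 1) := by
    simp only [heq]
    have h7 : Tendsto (fun m => P / ∏ i ∈ Finset.range m, h i) atTop (nhds (P / P)) :=
      tendsto_const_nhds.div hpartial hPne
    rw [div_self hPne] at h7
    exact h7
  exact (tendsto_add_atTop_iff_nat K₀).1 h6

lemma kernelF_eq_tailP {q a τ x : ℂ} (hx : x ≠ 0) (n : ℕ) :
    kernelF q a (τ * q ^ n / x) = tailP q a (τ / x) (n + 1) := by
  rw [kernelF, tailP]
  apply tprod_congr
  intro k
  rw [qfac]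
  congr 1
  · congr 1
    field_simp
    ring
  · congr 1
    field_simp
    ring

lemma kernelF_eq_tailP' {q a τ x : ℂ} (hq : q ≠ 0) (hx : x ≠ 0) (n : ℕ) :
    kernelF q a (τ * q ^ n / (q * x)) = tailP q a (τ / x) n := by
  rw [kernelF, tailP]
  apply tprod_congr
  intro k
  rw [qfac]
  congr 1
  · congr 1
    field_simp
    ring
  · congr 1
    field_simp
    ring

lemma kernelF_eq_tailP0 {q a τ x : ℂ} (hq : q ≠ 0) (hx : x ≠ 0) :
    kernelF q a (τ / (q * x)) = tailP q a (τ / x) 0 := by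
  have h := kernelF_eq_tailP' (a := a) (τ := τ) hq hx 0
  simpa using h

/-- The `q`-Euler transform of the Okubo block vector `Y₀` satisfies the `q`-Okubo type
system `(x I − S)·(aΦ(x) − Φ(qx))/((1−q)x) = (B + ((a−1)/(1−q)) I)·Φ(x)`,
provided the boundary term vanishes. -/
theorem euler_okubo (q a τ x : ℂ) (hq0 : 0 < ‖q‖) (hq1 : ‖q‖ < 1)
    (hτ : τ ≠ 0) (hx : x ≠ 0) (hqτx : ∀ m : ℕ, q ^ m * τ / x ≠ 1)
    (M N : ℕ) (hM : 1 ≤ M) (hN : 1 ≤ N)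
    (B : Fin N → Matrix (Fin M) (Fin M) ℂ) (t : Fin N → ℂ) (ht : ∀ i, t i ≠ 0)
    (hτt : ∀ (n : ℕ) (i : Fin N), τ * q ^ n ≠ t i ∧ τ * q ^ n ≠ t i / q)
    (y : ℂ → Fin M → ℂ)
    (hsys : ∀ n : ℕ, y (τ * q ^ n) - y (q * (τ * q ^ n)) =
      ((1 - q) * (τ * q ^ n)) •
        ∑ i, ((τ * q ^ n) - t i)⁻¹ • (B i).mulVec (y (τ * q ^ n)))
    (Y₀ : ℂ → Fin N × Fin M → ℂ)
    (hY₀ : ∀ z p, Y₀ z p = y z p.2 / (z - t p.1))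
    (hY₀lim : Filter.Tendsto (fun n : ℕ => Y₀ (τ * q ^ n)) Filter.atTop (nhds (Y₀ 0)))
    (hsum1 : ∀ p, Summable (fun n : ℕ =>
      Y₀ (τ * q ^ n) p * kernelF q a (τ * q ^ n / x) * (τ * q ^ n)))
    (hsum2 : ∀ p, Summable (fun n : ℕ =>
      Y₀ (τ * q ^ n) p * kernelF q a (τ * q ^ n / (q * x)) * (τ * q ^ n)))
    (hsum3 : ∀ p, Summable (fun n : ℕ =>
      ((Y₀ (τ * q ^ n) p - Y₀ (q * (τ * q ^ n)) p) / ((1 - q) * (τ * q ^ n)))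
        * kernelF q a (τ * q ^ n / x) * (τ * q ^ n)))
    (S : Matrix (Fin N × Fin M) (Fin N × Fin M) ℂ)
    (hS : S = Matrix.of fun p r : Fin N × Fin M => if p = r then t p.1 else 0)
    (hbdry : kernelF q a (τ / (q * x)) •
        ((τ • (1 : Matrix (Fin N × Fin M) (Fin N × Fin M) ℂ) - S).mulVec (Y₀ τ))
      = fun p => y 0 p.2)
    (Φ : ℂ → Fin N × Fin M → ℂ)
    (hΦ : ∀ w p, Φ w p =
      (1 - q) * ∑' n : ℕ, Y₀ (τ * q ^ n) p * kernelF q a (τ * q ^ n / w) * (τ * q ^ n)) :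
    (x • (1 : Matrix (Fin N × Fin M) (Fin N × Fin M) ℂ) - S).mulVec
        (fun p => (a * Φ x p - Φ (q * x) p) / ((1 - q) * x)) =
      (Matrix.of (fun p r : Fin N × Fin M => (B r.1) p.2 r.2)
        + ((a - 1) / (1 - q)) •
            (1 : Matrix (Fin N × Fin M) (Fin N × Fin M) ℂ)).mulVec (Φ x) := by
  -- basic nonvanishing facts
  have hqne : q ≠ 0 := by
    intro h; rw [h, norm_zero] at hq0; exact lt_irrefl _ hq0
  have hq1' : (1 : ℂ) - q ≠ 0 := by
    intro h
    have : q = 1 := by linear_combination -h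
    rw [this] at hq1; simp at hq1
  have hw : ∀ m : ℕ, (1 : ℂ) - q ^ m * (τ / x) ≠ 0 := by
    intro m h
    apply hqτx m
    have h2 : q ^ m * (τ / x) = 1 := by linear_combination -h
    field_simp at h2 ⊢
    linear_combination h2
  have hxt : ∀ n : ℕ, x - τ * q ^ n ≠ 0 := by
    intro n h
    apply hqτx n
    have h2 : x = τ * q ^ n := by linear_combination h
    rw [h2]
    field_simp
  have htn : ∀ n : ℕ, τ * q ^ n ≠ 0 := fun n => mul_ne_zero hτ (pow_ne_zero _ hqne)
  have htt : ∀ (n : ℕ) (i : Fin N), τ * q ^ n - t i ≠ 0 := fun n i =>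
    sub_ne_zero.2 (hτt n i).1
  -- diagonal mulVec helper
  subst hS
  have hdiag : ∀ (c : ℂ) (v : Fin N × Fin M → ℂ) (p : Fin N × Fin M),
      ((c • (1 : Matrix (Fin N × Fin M) (Fin N × Fin M) ℂ)
        - Matrix.of fun p r : Fin N × Fin M => if p = r then t p.1 else 0).mulVec v) p
      = (c - t p.1) * v p := by
    intro c v p
    simp [Matrix.mulVec, dotProduct, Matrix.one_apply, Matrix.sub_apply,
      Matrix.smul_apply, Matrix.of_apply, sub_mul, ite_mul, Finset.sum_sub_distrib,
      Finset.sum_ite_eq, mul_ite, mul_zero, zero_mul]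
  funext p
  obtain ⟨i, m⟩ := p
  -- translated series
  have hfr : ∀ r, Summable (fun n : ℕ =>
      Y₀ (τ * q ^ n) r * tailP q a (τ / x) (n + 1) * (τ * q ^ n)) := by
    intro r
    refine (hsum1 r).congr fun n => ?_
    rw [kernelF_eq_tailP hx]
  have hf : Summable (fun n : ℕ =>
      Y₀ (τ * q ^ n) (i, m) * tailP q a (τ / x) (n + 1) * (τ * q ^ n)) := hfr (i, m)
  have hg : Summable (fun n : ℕ =>
      Y₀ (τ * q ^ n) (i, m) * tailP q a (τ / x) n * (τ * q ^ n)) := by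
    refine (hsum2 (i, m)).congr fun n => ?_
    rw [kernelF_eq_tailP' hqne hx]
  -- the B-series identity
  have hd_eq : ∀ n : ℕ, (y (τ * q ^ n) m - y (q * (τ * q ^ n)) m) * tailP q a (τ / x) (n + 1)
      = ∑ r : Fin N × Fin M, ((1 - q) * B r.1 m r.2) *
          (Y₀ (τ * q ^ n) r * tailP q a (τ / x) (n + 1) * (τ * q ^ n)) := by
    intro n
    have h1 := congrFun (hsys n) m
    simp only [Pi.sub_apply, Pi.smul_apply, Finset.sum_apply, smul_eq_mul,
      Matrix.mulVec, dotProduct] at h1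
    rw [h1, Fintype.sum_prod_type]
    simp only [hY₀, Finset.mul_sum, Finset.sum_mul]
    apply Finset.sum_congr rfl
    intro j _
    apply Finset.sum_congr rfl
    intro m' _
    field_simp [htt n j]
  have hd : Summable (fun n : ℕ =>
      (y (τ * q ^ n) m - y (q * (τ * q ^ n)) m) * tailP q a (τ / x) (n + 1)) := by
    refine Summable.congr ?_ (fun n => (hd_eq n).symm)
    exact summable_sum (fun r _ => ((hfr r).mul_left _))
  have hyY : ∀ n : ℕ, y (τ * q ^ n) m = Y₀ (τ * q ^ n) (i, m) * (τ * q ^ n - t i) := by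
    intro n
    rw [hY₀]
    exact (div_mul_cancel₀ _ (htt n i)).symm
  -- limits
  have hylim : Tendsto (fun n : ℕ => y (τ * q ^ n) m) atTop (nhds (y 0 m)) := by
    have h1 := tendsto_pi_nhds.mp hY₀lim (i, m)
    have h2 : Tendsto (fun n : ℕ => τ * q ^ n) atTop (nhds 0) := by
      simpa using (tendsto_pow_atTop_nhds_zero_of_norm_lt_one hq1).const_mul τ
    have h3 : Tendsto (fun n : ℕ => Y₀ (τ * q ^ n) (i, m) * (τ * q ^ n - t i)) atTop
        (nhds (Y₀ 0 (i, m) * (0 - t i))) := h1.mul (h2.sub_const (t i))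
    have h4 : ∀ n : ℕ, Y₀ (τ * q ^ n) (i, m) * (τ * q ^ n - t i) = y (τ * q ^ n) m := by
      intro n
      rw [hY₀]
      field_simp [htt n i]
    have h5 : Y₀ 0 (i, m) * (0 - t i) = y 0 m := by
      rw [hY₀]
      have h6 : (0 : ℂ) - t i ≠ 0 := by
        rw [zero_sub, neg_ne_zero]; exact ht i
      exact div_mul_cancel₀ _ h6
    rw [← h5]
    exact (tendsto_congr h4).mp h3
  have hvlim : Tendsto (fun n : ℕ => y (τ * q ^ n) m * tailP q a (τ / x) n) atTop
      (nhds (y 0 m)) := by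
    have := hylim.mul (tailP_tendsto (a := a) hq1 hw)
    simpa using this
  -- boundary value
  have hv0 : y (τ * q ^ 0) m * tailP q a (τ / x) 0 = y 0 m := by
    have hb := congrFun hbdry (i, m)
    simp only [Pi.smul_apply, smul_eq_mul] at hb
    rw [hdiag τ (Y₀ τ) (i, m), kernelF_eq_tailP0 hqne hx] at hb
    have h4 : (τ - t i) * Y₀ τ (i, m) = y τ m := by
      rw [hY₀]
      have h7 : τ - t i ≠ 0 := by
        have := htt 0 i
        simpa using this
      field_simp [h7]
    rw [h4] at hb
    rw [pow_zero, mul_one]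
    linear_combination hb
  -- telescoping identity
  have htel : ∀ n : ℕ,
      (x - t i) / x * (a * (Y₀ (τ * q ^ n) (i, m) * tailP q a (τ / x) (n + 1) * (τ * q ^ n))
          - Y₀ (τ * q ^ n) (i, m) * tailP q a (τ / x) n * (τ * q ^ n))
        - (a - 1) * (Y₀ (τ * q ^ n) (i, m) * tailP q a (τ / x) (n + 1) * (τ * q ^ n))
        - (y (τ * q ^ n) m - y (q * (τ * q ^ n)) m) * tailP q a (τ / x) (n + 1)
      = y (τ * q ^ (n + 1)) m * tailP q a (τ / x) (n + 1)
        - y (τ * q ^ n) m * tailP q a (τ / x) n := by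
    intro n
    have hTn2 : tailP q a (τ / x) n
        = (1 - a * q ^ n * (τ / x)) * tailP q a (τ / x) (n + 1) / (1 - q ^ n * (τ / x)) := by
      rw [eq_div_iff (hw n), tailP_succ hq1 hw n, qfac]
      have h12 : x - q ^ n * τ ≠ 0 := by
        have := hxt n; rwa [mul_comm τ] at this
      field_simp
    have h12 : x - q ^ n * τ ≠ 0 := by
      have := hxt n; rwa [mul_comm τ] at this
    have hq' : q * (τ * q ^ n) = τ * q ^ (n + 1) := by ring
    rw [hq', hyY n, hyY (n + 1), hTn2]
    field_simp [hw n, h12, hxt n]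
    ring
  -- key tsum identity
  have hkey : (x - t i) / x *
        (a * (∑' n : ℕ, Y₀ (τ * q ^ n) (i, m) * tailP q a (τ / x) (n + 1) * (τ * q ^ n))
          - ∑' n : ℕ, Y₀ (τ * q ^ n) (i, m) * tailP q a (τ / x) n * (τ * q ^ n))
      - (a - 1) * (∑' n : ℕ, Y₀ (τ * q ^ n) (i, m) * tailP q a (τ / x) (n + 1) * (τ * q ^ n))
      - (∑' n : ℕ, (y (τ * q ^ n) m - y (q * (τ * q ^ n)) m) * tailP q a (τ / x) (n + 1))
      = 0 := by
    have e_eq : ∀ n : ℕ,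
        ((x - t i) / x * a - (a - 1)) *
            (Y₀ (τ * q ^ n) (i, m) * tailP q a (τ / x) (n + 1) * (τ * q ^ n))
          - (x - t i) / x *
            (Y₀ (τ * q ^ n) (i, m) * tailP q a (τ / x) n * (τ * q ^ n))
          - (y (τ * q ^ n) m - y (q * (τ * q ^ n)) m) * tailP q a (τ / x) (n + 1)
        = (x - t i) / x *
            (a * (Y₀ (τ * q ^ n) (i, m) * tailP q a (τ / x) (n + 1) * (τ * q ^ n))
              - Y₀ (τ * q ^ n) (i, m) * tailP q a (τ / x) n * (τ * q ^ n))
          - (a - 1) * (Y₀ (τ * q ^ n) (i, m) * tailP q a (τ / x) (n + 1) * (τ * q ^ n))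
          - (y (τ * q ^ n) m - y (q * (τ * q ^ n)) m) * tailP q a (τ / x) (n + 1) := by
      intro n; ring
    have hsummE : Summable (fun n : ℕ =>
        (x - t i) / x *
            (a * (Y₀ (τ * q ^ n) (i, m) * tailP q a (τ / x) (n + 1) * (τ * q ^ n))
              - Y₀ (τ * q ^ n) (i, m) * tailP q a (τ / x) n * (τ * q ^ n))
          - (a - 1) * (Y₀ (τ * q ^ n) (i, m) * tailP q a (τ / x) (n + 1) * (τ * q ^ n))
          - (y (τ * q ^ n) m - y (q * (τ * q ^ n)) m) * tailP q a (τ / x) (n + 1)) := by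
      refine Summable.congr ?_ e_eq
      exact ((hf.mul_left _).sub (hg.mul_left _)).sub hd
    have hsplit : (∑' n : ℕ,
        ((x - t i) / x *
            (a * (Y₀ (τ * q ^ n) (i, m) * tailP q a (τ / x) (n + 1) * (τ * q ^ n))
              - Y₀ (τ * q ^ n) (i, m) * tailP q a (τ / x) n * (τ * q ^ n))
          - (a - 1) * (Y₀ (τ * q ^ n) (i, m) * tailP q a (τ / x) (n + 1) * (τ * q ^ n))
          - (y (τ * q ^ n) m - y (q * (τ * q ^ n)) m) * tailP q a (τ / x) (n + 1)))
        = (x - t i) / x *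
            (a * (∑' n : ℕ, Y₀ (τ * q ^ n) (i, m) * tailP q a (τ / x) (n + 1) * (τ * q ^ n))
              - ∑' n : ℕ, Y₀ (τ * q ^ n) (i, m) * tailP q a (τ / x) n * (τ * q ^ n))
          - (a - 1) *
              (∑' n : ℕ, Y₀ (τ * q ^ n) (i, m) * tailP q a (τ / x) (n + 1) * (τ * q ^ n))
          - (∑' n : ℕ, (y (τ * q ^ n) m - y (q * (τ * q ^ n)) m)
              * tailP q a (τ / x) (n + 1)) := by
      rw [tsum_congr (fun n => (e_eq n).symm)]
      rw [Summable.tsum_sub ((hf.mul_left _).sub (hg.mul_left _)) hd,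
        Summable.tsum_sub (hf.mul_left _) (hg.mul_left _), tsum_mul_left, tsum_mul_left]
      ring
    rw [← hsplit]
    -- telescoping sum is zero
    have hps := hsummE.hasSum.tendsto_sum_nat
    have hps2 : ∀ K : ℕ, (∑ n ∈ Finset.range K,
        ((x - t i) / x *
            (a * (Y₀ (τ * q ^ n) (i, m) * tailP q a (τ / x) (n + 1) * (τ * q ^ n))
              - Y₀ (τ * q ^ n) (i, m) * tailP q a (τ / x) n * (τ * q ^ n))
          - (a - 1) * (Y₀ (τ * q ^ n) (i, m) * tailP q a (τ / x) (n + 1) * (τ * q ^ n))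
          - (y (τ * q ^ n) m - y (q * (τ * q ^ n)) m) * tailP q a (τ / x) (n + 1)))
        = y (τ * q ^ K) m * tailP q a (τ / x) K
          - y (τ * q ^ 0) m * tailP q a (τ / x) 0 := by
      intro K
      rw [Finset.sum_congr rfl (fun n _ => htel n)]
      exact Finset.sum_range_sub (fun n => y (τ * q ^ n) m * tailP q a (τ / x) n) K
    have hps3 : Tendsto (fun K : ℕ =>
        y (τ * q ^ K) m * tailP q a (τ / x) K - y (τ * q ^ 0) m * tailP q a (τ / x) 0)
        atTop (nhds 0) := by
      have h11 := hvlim.sub_const (y (τ * q ^ 0) m * tailP q a (τ / x) 0)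
      have h13 : y 0 m - y (τ * q ^ 0) m * tailP q a (τ / x) 0 = 0 := by
        rw [hv0, sub_self]
      rwa [h13] at h11
    have hps4 := (tendsto_congr hps2).mpr hps3
    exact tendsto_nhds_unique hps hps4
  -- final assembly
  rw [hdiag x _ (i, m), Matrix.add_mulVec, Pi.add_apply, Matrix.smul_mulVec,
    Matrix.one_mulVec, Pi.smul_apply, smul_eq_mul]
  have hBmul : (Matrix.of (fun p r : Fin N × Fin M => B r.1 p.2 r.2)).mulVec (Φ x) (i, m)
      = ∑ r : Fin N × Fin M, B r.1 m r.2 * Φ x r := by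
    simp [Matrix.mulVec, dotProduct]
  rw [hBmul]
  have hΦx : ∀ r, Φ x r
      = (1 - q) * ∑' n : ℕ, Y₀ (τ * q ^ n) r * tailP q a (τ / x) (n + 1) * (τ * q ^ n) := by
    intro r
    rw [hΦ]
    congr 1
    exact tsum_congr fun n => by rw [kernelF_eq_tailP hx]
  have hΦqx : Φ (q * x) (i, m)
      = (1 - q) * ∑' n : ℕ, Y₀ (τ * q ^ n) (i, m) * tailP q a (τ / x) n * (τ * q ^ n) := by
    rw [hΦ]
    congr 1
    exact tsum_congr fun n => by rw [kernelF_eq_tailP' hqne hx]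
  have hdsum : (∑' n : ℕ, (y (τ * q ^ n) m - y (q * (τ * q ^ n)) m) * tailP q a (τ / x) (n + 1))
      = ∑ r : Fin N × Fin M, ((1 - q) * B r.1 m r.2) *
          ∑' n : ℕ, Y₀ (τ * q ^ n) r * tailP q a (τ / x) (n + 1) * (τ * q ^ n) := by
    rw [tsum_congr hd_eq, Summable.tsum_finsetSum (fun r _ => (hfr r).mul_left _)]
    exact Finset.sum_congr rfl fun r _ => tsum_mul_left
  rw [hΦqx]
  simp only [hΦx]
  have hsum_eq : (∑ r : Fin N × Fin M, B r.1 m r.2 *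
        ((1 - q) * ∑' n : ℕ, Y₀ (τ * q ^ n) r * tailP q a (τ / x) (n + 1) * (τ * q ^ n)))
      = ∑ r : Fin N × Fin M, ((1 - q) * B r.1 m r.2) *
          ∑' n : ℕ, Y₀ (τ * q ^ n) r * tailP q a (τ / x) (n + 1) * (τ * q ^ n) :=
    Finset.sum_congr rfl fun r _ => by ring
  rw [hsum_eq, ← hdsum]
  set A := ∑' n : ℕ, Y₀ (τ * q ^ n) (i, m) * tailP q a (τ / x) (n + 1) * (τ * q ^ n) with hA
  set G := ∑' n : ℕ, Y₀ (τ * q ^ n) (i, m) * tailP q a (τ / x) n * (τ * q ^ n) with hG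
  set D := ∑' n : ℕ, (y (τ * q ^ n) m - y (q * (τ * q ^ n)) m) * tailP q a (τ / x) (n + 1)
    with hD
  field_simp at hkey ⊢
  linear_combination hkey
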